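/- Let π be a generalized permutation of type (l,m) satisfying the convention. Then π admits a suspension data ζ with Im(Σ_{i=1}^{l} ζ_{π(i)}) = 0 if and only if π is strongly irreducible. -/

import Mathlib

open Finset

/-- A generalized permutation of type `(l, m)`: a map from positions `1, …, l + m`
(the top line being positions `1, …, l` and the bottom line positions `l+1, …, l+m`)
to an alphabet `A`, such that every letter has exactly two preimages. -/
structure GenPerm (A : Type*) [DecidableEq A] where
  l : ℕ
  m : ℕ
  p : ℕ → A
  double : ∀ a : A, ((Finset.Icc 1 (l + m)).filter (fun i => p i = a)).card = 2

namespace GenPerm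

variable {A : Type*} [DecidableEq A]

/-- Total number of positions, `l + m = 2d`. -/
def size (π : GenPerm A) : ℕ := π.l + π.m

/-- The multiset of letters occupying positions `a, a+1, …, b`. -/
def seg (π : GenPerm A) (a b : ℕ) : Multiset A :=
  (Finset.Icc a b).val.map π.p

/-- `i` and `j` are the two positions of a common letter (i.e. `j = σ(i)` where `σ` is the
fixed-point-free involution associated to `π`). -/
def IsTwin (π : GenPerm A) (i j : ℕ) : Prop :=
  1 ≤ i ∧ i ≤ π.size ∧ 1 ≤ j ∧ j ≤ π.size ∧ i ≠ j ∧ π.p i = π.p j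

/-- The convention: some letter has both occurrences on the top line, and some letter has
both occurrences on the bottom line. -/
def Convention (π : GenPerm A) : Prop :=
  (∃ i j, π.IsTwin i j ∧ i ≤ π.l ∧ j ≤ π.l) ∧
  (∃ i j, π.IsTwin i j ∧ π.l < i ∧ π.l < j)

/-- `π` is reducible: it admits a decomposition with corners `A∪B`, `D∪B`, `A∪C`, `D∪C`
(for disjoint, not all empty, subsets `A,B,C,D` of the alphabet) such that (i) no corner is
empty, or (ii) exactly one corner is empty and it is a left one, or (iii) exactly two corners
are empty and they are both left or both right. -/
def Reducible (π : GenPerm A) : Prop :=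
  ∃ (As Bs Cs Ds : Finset A) (i1 i2 i3 i4 : ℕ),
    Disjoint As Bs ∧ Disjoint As Cs ∧ Disjoint As Ds ∧
    Disjoint Bs Cs ∧ Disjoint Bs Ds ∧ Disjoint Cs Ds ∧
    ¬(As = ∅ ∧ Bs = ∅ ∧ Cs = ∅ ∧ Ds = ∅) ∧
    i1 ≤ i2 ∧ i2 ≤ π.l ∧ π.l ≤ i3 ∧ i3 ≤ i4 ∧ i4 ≤ π.size ∧
    π.seg 1 i1 = As.val + Bs.val ∧
    π.seg (i2 + 1) π.l = Ds.val + Bs.val ∧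
    π.seg (π.l + 1) i3 = As.val + Cs.val ∧
    π.seg (i4 + 1) π.size = Ds.val + Cs.val ∧
    ((π.seg 1 i1 ≠ 0 ∧ π.seg (i2 + 1) π.l ≠ 0 ∧ π.seg (π.l + 1) i3 ≠ 0 ∧
        π.seg (i4 + 1) π.size ≠ 0) ∨
     (π.seg 1 i1 = 0 ∧ π.seg (i2 + 1) π.l ≠ 0 ∧ π.seg (π.l + 1) i3 ≠ 0 ∧
        π.seg (i4 + 1) π.size ≠ 0) ∨
     (π.seg 1 i1 ≠ 0 ∧ π.seg (i2 + 1) π.l ≠ 0 ∧ π.seg (π.l + 1) i3 = 0 ∧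
        π.seg (i4 + 1) π.size ≠ 0) ∨
     (π.seg 1 i1 = 0 ∧ π.seg (i2 + 1) π.l ≠ 0 ∧ π.seg (π.l + 1) i3 = 0 ∧
        π.seg (i4 + 1) π.size ≠ 0) ∨
     (π.seg 1 i1 ≠ 0 ∧ π.seg (i2 + 1) π.l = 0 ∧ π.seg (π.l + 1) i3 ≠ 0 ∧
        π.seg (i4 + 1) π.size = 0))

/-- `π` is irreducible if it is not reducible. -/
def Irreducible (π : GenPerm A) : Prop := ¬ π.Reducible

/-- `π` is strongly irreducible if every decomposition with corners `A∪B`, `D∪B`, `A∪C`,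
`D∪C` (for disjoint subsets) has all four corners empty. -/
def StronglyIrreducible (π : GenPerm A) : Prop :=
  ∀ (As Bs Cs Ds : Finset A) (i1 i2 i3 i4 : ℕ),
    Disjoint As Bs → Disjoint As Cs → Disjoint As Ds →
    Disjoint Bs Cs → Disjoint Bs Ds → Disjoint Cs Ds →
    i1 ≤ i2 → i2 ≤ π.l → π.l ≤ i3 → i3 ≤ i4 → i4 ≤ π.size →
    π.seg 1 i1 = As.val + Bs.val →
    π.seg (i2 + 1) π.l = Ds.val + Bs.val →
    π.seg (π.l + 1) i3 = As.val + Cs.val →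
    π.seg (i4 + 1) π.size = Ds.val + Cs.val →
    (π.seg 1 i1 = 0 ∧ π.seg (i2 + 1) π.l = 0 ∧ π.seg (π.l + 1) i3 = 0 ∧
      π.seg (i4 + 1) π.size = 0)

/-- `Σ_{j=1}^{k} ζ_{π(j)}` (partial sum along the top line). -/
noncomputable def topSum (π : GenPerm A) (ζ : A → ℂ) (k : ℕ) : ℂ := ∑ j ∈ Finset.Icc 1 k, ζ (π.p j)

/-- `Σ_{j=1}^{k} ζ_{π(l+j)}` (partial sum along the bottom line). -/
noncomputable def botSum (π : GenPerm A) (ζ : A → ℂ) (k : ℕ) : ℂ := ∑ j ∈ Finset.Icc 1 k, ζ (π.p (π.l + j))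

/-- Real version of `topSum`. -/
noncomputable def topSumR (π : GenPerm A) (τ : A → ℝ) (k : ℕ) : ℝ := ∑ j ∈ Finset.Icc 1 k, τ (π.p j)

/-- Real version of `botSum`. -/
noncomputable def botSumR (π : GenPerm A) (τ : A → ℝ) (k : ℕ) : ℝ := ∑ j ∈ Finset.Icc 1 k, τ (π.p (π.l + j))

/-- `ζ` is a suspension data for `π`. -/
def IsSuspension (π : GenPerm A) (ζ : A → ℂ) : Prop :=
  (∀ a, 0 < (ζ a).re) ∧
  (∀ i, 1 ≤ i → i ≤ π.l - 1 → 0 < (π.topSum ζ i).im) ∧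
  (∀ i, 1 ≤ i → i ≤ π.m - 1 → (π.botSum ζ i).im < 0) ∧
  π.topSum ζ π.l = π.botSum ζ π.m

/-- `τ` is a pseudo-suspension for `π`. -/
def IsPseudoSusp (π : GenPerm A) (τ : A → ℝ) : Prop :=
  (∀ k, 1 ≤ k → k ≤ π.l → 0 ≤ π.topSumR τ k) ∧
  (∀ k, 1 ≤ k → k ≤ π.m → π.botSumR τ k ≤ 0) ∧
  π.topSumR τ π.l = 0 ∧ π.botSumR τ π.m = 0

/-- `τ` is a strict pseudo-suspension for `π`: all the inequalities are strict except the
extremal ones. -/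
def IsStrictPseudoSusp (π : GenPerm A) (τ : A → ℝ) : Prop :=
  π.IsPseudoSusp τ ∧
  (∀ k, 1 ≤ k → k ≤ π.l - 1 → 0 < π.topSumR τ k) ∧
  (∀ k, 1 ≤ k → k ≤ π.m - 1 → π.botSumR τ k < 0)

/-- Number of occurrences of the letter `a` on the top line; so `a ∈ 𝒜₀ ↔ topCount = 2`,
`a ∈ 𝒜₁ ↔ topCount = 0`, and `a ∈ 𝒜₀₁ ↔ topCount = 1`. -/
def topCount (π : GenPerm A) (a : A) : ℕ :=
  ((Finset.Icc 1 π.l).filter (fun i => π.p i = a)).card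

end GenPerm

section Aux

open Finset

/-- A down-closed subset of `Icc (a+1) b` is `Icc (a+1) (a + card)`. -/
lemma downClosed_eq_Icc {a b : ℕ} {S : Finset ℕ} (hS : S ⊆ Finset.Icc (a+1) b)
    (hdc : ∀ p ∈ S, ∀ x, a+1 ≤ x → x ≤ p → x ∈ S) :
    S = Finset.Icc (a+1) (a + S.card) := by
  ext x
  simp only [Finset.mem_Icc]
  constructor
  · intro hx
    have hb := hS hx
    simp only [Finset.mem_Icc] at hb
    have hsub : Finset.Icc (a+1) x ⊆ S := fun y hy => by
      simp only [Finset.mem_Icc] at hy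
      exact hdc x hx y hy.1 hy.2
    have := Finset.card_le_card hsub
    rw [Nat.card_Icc] at this
    omega
  · rintro ⟨h1, h2⟩
    by_contra hx
    have hlt : ∀ p ∈ S, p < x := by
      intro p hp
      by_contra hge
      exact hx (hdc p hp x h1 (by omega))
    have hsub : S ⊆ Finset.Icc (a+1) (x-1) := fun p hp => by
      have := hS hp
      simp only [Finset.mem_Icc] at this ⊢
      have := hlt p hp
      omega
    have := Finset.card_le_card hsub
    rw [Nat.card_Icc] at this
    omega

/-- An up-closed subset of `Icc (a+1) b` is `Icc (b - card + 1) b`. -/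
lemma upClosed_eq_Icc {a b : ℕ} {S : Finset ℕ} (hS : S ⊆ Finset.Icc (a+1) b)
    (huc : ∀ p ∈ S, ∀ x, p ≤ x → x ≤ b → x ∈ S) :
    S = Finset.Icc (b - S.card + 1) b := by
  have hcard : S.card ≤ b - a := by
    have := Finset.card_le_card hS
    rw [Nat.card_Icc] at this; omega
  ext x
  simp only [Finset.mem_Icc]
  constructor
  · intro hx
    have hb := hS hx
    simp only [Finset.mem_Icc] at hb
    have hsub : Finset.Icc x b ⊆ S := fun y hy => by
      simp only [Finset.mem_Icc] at hy
      exact huc x hx y hy.1 hy.2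
    have := Finset.card_le_card hsub
    rw [Nat.card_Icc] at this
    omega
  · rintro ⟨h1, h2⟩
    by_contra hx
    have hlt : ∀ p ∈ S, x < p := by
      intro p hp
      by_contra hge
      exact hx (huc p hp x (by omega) h2)
    have hsub : S ⊆ Finset.Icc (x+1) b := fun p hp => by
      have := hS hp
      simp only [Finset.mem_Icc] at this ⊢
      have := hlt p hp
      omega
    have := Finset.card_le_card hsub
    rw [Nat.card_Icc] at this
    omega

end Aux
section Stiemke

open Finset

/-- Stiemke's lemma: if a submodule of `K → ℝ` misses the open positive orthant, there is a
nonzero nonnegative functional vanishing on it. -/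
lemma stiemke {K : Type*} [Fintype K] [DecidableEq K] (W : Submodule ℝ (K → ℝ))
    (hdisj : ∀ x ∈ W, ¬ (∀ j, 0 < x j)) :
    ∃ y : K → ℝ, (∀ j, 0 ≤ y j) ∧ (∃ j, y j ≠ 0) ∧ ∀ x ∈ W, ∑ j, y j * x j = 0 := by
  classical
  set S : Set (K → ℝ) := Set.pi Set.univ (fun _ => Set.Ioi (0:ℝ)) with hSdef
  have hSopen : IsOpen S := isOpen_set_pi Set.finite_univ (fun _ _ => isOpen_Ioi)
  have hSconv : Convex ℝ S := convex_pi (fun _ _ => convex_Ioi 0)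
  have hWconv : Convex ℝ (W : Set (K → ℝ)) := W.convex
  have hdis : Disjoint S (W : Set (K → ℝ)) := by
    rw [Set.disjoint_left]
    intro x hxS hxW
    exact hdisj x hxW (fun j => hxS j (Set.mem_univ j))
  obtain ⟨f, u, hfS, hfW⟩ := geometric_hahn_banach_open hSconv hSopen hWconv hdis
  have hu0 : u ≤ 0 := by simpa using hfW 0 W.zero_mem
  have hfW0 : ∀ x ∈ W, f x = 0 := by
    intro x hx
    by_contra hne
    have hmem : ((u - 1) / f x) • x ∈ W := W.smul_mem _ hx
    have := hfW _ hmem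
    rw [map_smul] at this
    simp only [smul_eq_mul] at this
    rw [div_mul_cancel₀ _ hne] at this
    linarith
  have hone : (fun _ => (1:ℝ)) ∈ S := fun j _ => by norm_num
  have hfone : f (fun _ => (1:ℝ)) < 0 := lt_of_lt_of_le (hfS _ hone) hu0
  set y : K → ℝ := fun j => - f (Pi.single j 1) with hydef
  have hexp : ∀ x : K → ℝ, f x = - ∑ j, x j * y j := by
    intro x
    have hx : f x = ∑ j, f (Pi.single j (x j)) := by
      conv_lhs => rw [← Finset.univ_sum_single x]
      rw [map_sum]
    rw [hx, ← Finset.sum_neg_distrib]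
    refine Finset.sum_congr rfl (fun j _ => ?_)
    have h1 : (Pi.single j (x j) : K → ℝ) = (x j) • (Pi.single j (1:ℝ) : K → ℝ) := by
      rw [← Pi.single_smul]; simp
    rw [h1, map_smul, smul_eq_mul]
    simp only [hydef]
    ring
  have hynn : ∀ j, 0 ≤ y j := by
    intro j
    by_contra hneg
    push_neg at hneg
    set δ : ℝ := f (Pi.single j 1) with hδ
    have hδpos : 0 < δ := by
      have : y j = -δ := rfl
      simp only [hydef] at hneg
      linarith
    set ε : ℝ := δ / (2 * (- f (fun _ => (1:ℝ)))) with hε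
    have hεpos : 0 < ε := by
      apply div_pos hδpos; linarith
    have hmem : ((Pi.single j 1 : K → ℝ) + ε • (fun _ => (1:ℝ))) ∈ S := by
      intro i _
      simp only [Pi.add_apply, Pi.smul_apply, smul_eq_mul, mul_one, Pi.single_apply]
      by_cases h : i = j <;> simp [h, Set.mem_Ioi] <;> linarith
    have hlt := lt_of_lt_of_le (hfS _ hmem) hu0
    rw [map_add, map_smul, smul_eq_mul] at hlt
    have hFne : (f fun _ => (1:ℝ)) ≠ 0 := ne_of_lt hfone
    have hcalc : ε * f (fun _ => (1:ℝ)) = -(δ/2) := by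
      rw [hε]; field_simp
    rw [hcalc] at hlt
    simp only [← hδ] at hlt
    linarith
  refine ⟨y, hynn, ?_, ?_⟩
  · by_contra hall
    push_neg at hall
    have : f (fun _ => (1:ℝ)) = 0 := by
      rw [hexp]
      simp [hall]
    linarith
  · intro x hx
    have h1 := hfW0 x hx
    rw [hexp] at h1
    have : ∑ j, x j * y j = 0 := by linarith
    calc ∑ j, y j * x j = ∑ j, x j * y j := by
          exact Finset.sum_congr rfl (fun j _ => mul_comm _ _)
      _ = 0 := this

/-- If a functional vanishes on the kernel of `u`, it is a multiple of `u`. -/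
lemma span_one {M : Type*} [AddCommGroup M] [Module ℝ M] (u φ : M →ₗ[ℝ] ℝ)
    (h : ∀ x, u x = 0 → φ x = 0) : ∃ s : ℝ, ∀ x, φ x = s * u x := by
  by_cases hu : ∀ x, u x = 0
  · exact ⟨0, fun x => by rw [h x (hu x), hu x, mul_zero]⟩
  · push_neg at hu
    obtain ⟨x0, hx0⟩ := hu
    refine ⟨φ x0 / u x0, fun x => ?_⟩
    have hker : u (x - (u x / u x0) • x0) = 0 := by
      rw [map_sub, map_smul, smul_eq_mul, div_mul_cancel₀ _ hx0, sub_self]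
    have := h _ hker
    rw [map_sub, map_smul, smul_eq_mul] at this
    field_simp at this ⊢
    linarith [this]

/-- If a functional vanishes on the joint kernel of `u` and `w`, it is a combination. -/
lemma span_two {M : Type*} [AddCommGroup M] [Module ℝ M] (u w φ : M →ₗ[ℝ] ℝ)
    (h : ∀ x, u x = 0 → w x = 0 → φ x = 0) :
    ∃ s t : ℝ, ∀ x, φ x = s * u x + t * w x := by
  by_cases hw : ∀ x, w x = 0
  · obtain ⟨s, hs⟩ := span_one u φ (fun x hx => h x hx (hw x))
    exact ⟨s, 0, fun x => by rw [hs x, zero_mul, add_zero]⟩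
  · push_neg at hw
    obtain ⟨x0, hx0⟩ := hw
    set c : ℝ := u x0 / w x0 with hc
    set d : ℝ := φ x0 / w x0 with hd
    have key : ∀ x, (u - c • w) x = 0 → (φ - d • w) x = 0 := by
      intro x hx
      simp only [LinearMap.sub_apply, LinearMap.smul_apply, smul_eq_mul, sub_eq_zero] at hx
      set x' := x - (w x / w x0) • x0 with hx'
      have hwx' : w x' = 0 := by
        rw [hx', map_sub, map_smul, smul_eq_mul, div_mul_cancel₀ _ hx0, sub_self]
      have hux' : u x' = 0 := by
        rw [hx', map_sub, map_smul, smul_eq_mul, hx, hc]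
        field_simp
        ring
      have hφ := h x' hux' hwx'
      rw [hx', map_sub, map_smul, smul_eq_mul] at hφ
      simp only [LinearMap.sub_apply, LinearMap.smul_apply, smul_eq_mul, sub_eq_zero, hd]
      field_simp at hφ ⊢
      linarith [hφ]
    obtain ⟨s, hs⟩ := span_one (u - c • w) (φ - d • w) key
    refine ⟨s, d - s * c, fun x => ?_⟩
    have := hs x
    simp only [LinearMap.sub_apply, LinearMap.smul_apply, smul_eq_mul] at this
    linarith [this]

end Stiemke
section Basics

open Finset GenPerm

variable {A : Type*} [DecidableEq A] (π : GenPerm A)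

/-- Positions of the occurrences of `a` on the top line. -/
def tOcc (a : A) : Finset ℕ := (Finset.Icc 1 π.l).filter (fun i => π.p i = a)

/-- Relative positions of the occurrences of `a` on the bottom line. -/
def bOcc (a : A) : Finset ℕ := (Finset.Icc 1 π.m).filter (fun q => π.p (π.l + q) = a)

/-- Number of occurrences of `a` on the top line. -/
def tcnt (a : A) : ℕ := (tOcc π a).card

/-- Number of occurrences of `a` on the bottom line. -/
def bcnt (a : A) : ℕ := (bOcc π a).card

lemma Icc_one_eq_Ioc (x : ℕ) : Finset.Icc 1 x = Finset.Ioc 0 x := by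
  ext i; simp [Finset.mem_Icc, Finset.mem_Ioc]; omega

lemma card_shift (l u v : ℕ) (P : ℕ → Prop) [DecidablePred P] :
    ((Finset.Icc (l+u) (l+v)).filter P).card
      = ((Finset.Icc u v).filter (fun q => P (l + q))).card := by
  refine Finset.card_bij' (fun i _ => i - l) (fun q _ => l + q) ?_ ?_ ?_ ?_
  · intro i hi
    simp only [Finset.mem_filter, Finset.mem_Icc] at hi ⊢
    have h : l + (i - l) = i := by omega
    rw [h]
    exact ⟨⟨by omega, by omega⟩, hi.2⟩
  · intro q hq
    simp only [Finset.mem_filter, Finset.mem_Icc] at hq ⊢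
    exact ⟨⟨by omega, by omega⟩, hq.2⟩
  · intro i hi
    simp only [Finset.mem_filter, Finset.mem_Icc] at hi
    show l + (i - l) = i
    omega
  · intro q hq
    simp only [Finset.mem_filter, Finset.mem_Icc] at hq
    show l + q - l = q
    omega

lemma bcnt_eq_abs (a : A) :
    ((Finset.Icc (π.l+1) (π.l+π.m)).filter (fun i => π.p i = a)).card = bcnt π a := by
  rw [card_shift]; rfl

lemma tcnt_add_bcnt (a : A) : tcnt π a + bcnt π a = 2 := by
  have hd := π.double a
  have hsplit : Finset.Icc 1 (π.l + π.m) = Finset.Icc 1 π.l ∪ Finset.Icc (π.l+1) (π.l+π.m) := by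
    ext i; simp [Finset.mem_Icc, Finset.mem_union]; omega
  rw [hsplit, Finset.filter_union, Finset.card_union_of_disjoint] at hd
  · rw [bcnt_eq_abs] at hd
    exact hd
  · apply Finset.disjoint_filter_filter
    rw [Finset.disjoint_left]
    intro i hi hj
    simp only [Finset.mem_Icc] at hi hj
    omega

/-- The alphabet of a generalized permutation is finite. -/
noncomputable def fintypeOf : Fintype A := by
  apply Fintype.ofSurjective (fun i : (Finset.Icc 1 (π.l + π.m) : Finset ℕ) => π.p i)
  intro a
  have hd := π.double a
  have hne : ((Finset.Icc 1 (π.l + π.m)).filter (fun i => π.p i = a)).Nonempty := by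
    rw [← Finset.card_pos, hd]; norm_num
  obtain ⟨i, hi⟩ := hne
  simp only [Finset.mem_filter] at hi
  exact ⟨⟨i, hi.1⟩, hi.2⟩

lemma conv_l2 (hconv : π.Convention) : 2 ≤ π.l := by
  obtain ⟨⟨i, j, ⟨h1, _, h3, _, h5, _⟩, hi, hj⟩, _⟩ := hconv
  omega

lemma conv_m2 (hconv : π.Convention) : 2 ≤ π.m := by
  obtain ⟨_, ⟨i, j, ⟨h1, h2, h3, h4, h5, _⟩, hi, hj⟩⟩ := hconv
  have : π.size = π.l + π.m := rfl
  omega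

lemma count_seg (a : A) (c d : ℕ) :
    (π.seg c d).count a = ((Finset.Icc c d).filter (fun i => π.p i = a)).card := by
  rw [GenPerm.seg, Multiset.count_map]
  rw [show ((Finset.Icc c d).filter (fun i => π.p i = a)).card
      = ((Finset.Icc c d).val.filter (fun i => π.p i = a)).card from rfl]
  congr 1
  exact Multiset.filter_congr (fun x _ => eq_comm)

lemma mem_seg {a : A} {c d : ℕ} (i : ℕ) (hi : i ∈ Finset.Icc c d) (hp : π.p i = a) :
    a ∈ π.seg c d := by
  rw [GenPerm.seg]
  exact Multiset.mem_map.mpr ⟨i, Finset.mem_val.mpr hi, hp⟩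

lemma count_finset_add {Xs Ys : Finset A} (hd : Disjoint Xs Ys) (a : A) :
    (Xs.val + Ys.val).count a ≤ 1 := by
  rw [Multiset.count_add]
  by_cases hx : a ∈ Xs
  · have hy : a ∉ Ys := Finset.disjoint_left.mp hd hx
    rw [Multiset.count_eq_one_of_mem Xs.nodup hx,
      Multiset.count_eq_zero.mpr (fun h => hy (Finset.mem_val.mp h))]
  · rw [Multiset.count_eq_zero.mpr (fun h => hx (Finset.mem_val.mp h))]
    by_cases hy : a ∈ Ys
    · rw [Multiset.count_eq_one_of_mem Ys.nodup hy]
    · rw [Multiset.count_eq_zero.mpr (fun h => hy (Finset.mem_val.mp h))]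
      norm_num

lemma count_val (Xs : Finset A) (a : A) : Xs.val.count a = if a ∈ Xs then 1 else 0 := by
  by_cases h : a ∈ Xs
  · rw [if_pos h]
    exact Multiset.count_eq_one_of_mem Xs.nodup h
  · rw [if_neg h]
    exact Multiset.count_eq_zero.mpr (fun hm => h (Finset.mem_val.mp hm))

lemma not_seg_top_eq (hconv : π.Convention) {Xs Ys : Finset A} (hd : Disjoint Xs Ys) :
    π.seg 1 π.l ≠ Xs.val + Ys.val := by
  obtain ⟨⟨i, j, ⟨h1, _, h3, _, h5, h6⟩, hi, hj⟩, _⟩ := hconv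
  intro heq
  have hc := congrArg (Multiset.count (π.p i)) heq
  rw [count_seg] at hc
  have hsub : ({i, j} : Finset ℕ) ⊆ (Finset.Icc 1 π.l).filter (fun k => π.p k = π.p i) := by
    intro x hx
    simp only [Finset.mem_insert, Finset.mem_singleton] at hx
    rcases hx with rfl | rfl <;> simp [Finset.mem_Icc, *]
  have h2 := Finset.card_le_card hsub
  rw [Finset.card_pair h5] at h2
  have := count_finset_add hd (π.p i)
  omega

lemma not_seg_bot_eq (hconv : π.Convention) {Xs Ys : Finset A} (hd : Disjoint Xs Ys) :
    π.seg (π.l + 1) π.size ≠ Xs.val + Ys.val := by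
  obtain ⟨_, ⟨i, j, ⟨h1, h2, h3, h4, h5, h6⟩, hi, hj⟩⟩ := hconv
  intro heq
  have hc := congrArg (Multiset.count (π.p i)) heq
  rw [count_seg] at hc
  have hsub : ({i, j} : Finset ℕ) ⊆ (Finset.Icc (π.l+1) π.size).filter (fun k => π.p k = π.p i) := by
    intro x hx
    simp only [Finset.mem_insert, Finset.mem_singleton] at hx
    rcases hx with rfl | rfl
    · rw [Finset.mem_filter, Finset.mem_Icc]
      exact ⟨⟨by omega, by omega⟩, rfl⟩
    · rw [Finset.mem_filter, Finset.mem_Icc]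
      exact ⟨⟨by omega, by omega⟩, h6.symm⟩
  have h2' := Finset.card_le_card hsub
  rw [Finset.card_pair h5] at h2'
  have := count_finset_add hd (π.p i)
  omega

lemma topSumR_eq (τ : A → ℝ) (k : ℕ) :
    π.topSumR τ k = ∑ i ∈ Finset.Ioc 0 k, τ (π.p i) := by
  rw [GenPerm.topSumR, Icc_one_eq_Ioc]

lemma botSumR_eq (τ : A → ℝ) (k : ℕ) :
    π.botSumR τ k = ∑ i ∈ Finset.Ioc π.l (π.l + k), τ (π.p i) := by
  rw [GenPerm.botSumR, Icc_one_eq_Ioc,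
    show Finset.Ioc π.l (π.l + k) = Finset.Ioc (π.l + 0) (π.l + k) by rw [Nat.add_zero],
    ← Finset.map_add_left_Ioc 0 k π.l, Finset.sum_map]
  simp [addLeftEmbedding]

lemma seg_sum (τ : A → ℝ) (c d : ℕ) :
    ((π.seg c d).map τ).sum = ∑ i ∈ Finset.Icc c d, τ (π.p i) := by
  rw [GenPerm.seg, Multiset.map_map]
  rfl

lemma Icc_sum_succ_bot (c : ℕ → ℝ) {k e : ℕ} (h : k ≤ e) :
    ∑ i ∈ Finset.Icc k e, c i = c k + ∑ i ∈ Finset.Icc (k+1) e, c i := by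
  rw [← Finset.Ico_add_one_right_eq_Icc, ← Finset.Ico_add_one_right_eq_Icc,
    Finset.sum_eq_sum_Ico_succ_bot (by omega : k < e + 1)]

end Basics
section Forward

open Finset GenPerm

variable {A : Type*} [DecidableEq A] (π : GenPerm A)

lemma seg_empty {c d : ℕ} (h : d < c) : π.seg c d = 0 := by
  rw [GenPerm.seg, Finset.Icc_eq_empty (by omega)]
  rfl

lemma finset_sum_val (τ : A → ℝ) (Xs : Finset A) : (Xs.val.map τ).sum = ∑ a ∈ Xs, τ a := rfl

theorem forward_dir (hconv : π.Convention) (ζ : A → ℂ) (hsusp : π.IsSuspension ζ)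
    (him : (π.topSum ζ π.l).im = 0) : π.StronglyIrreducible := by
  obtain ⟨hre, htopim, hbotim, heqtb⟩ := hsusp
  set τ : A → ℝ := fun a => (ζ a).im with hτ
  have htopR : ∀ k, π.topSumR τ k = (π.topSum ζ k).im := by
    intro k; rw [GenPerm.topSum, GenPerm.topSumR, Complex.im_sum]
  have hbotR : ∀ k, π.botSumR τ k = (π.botSum ζ k).im := by
    intro k; rw [GenPerm.botSum, GenPerm.botSumR, Complex.im_sum]
  have hl2 := conv_l2 π hconv
  have hm2 := conv_m2 π hconv
  have hTl : π.topSumR τ π.l = 0 := by rw [htopR]; exact him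
  have hBm : π.botSumR τ π.m = 0 := by rw [hbotR, ← heqtb]; exact him
  have hTpos : ∀ k, 1 ≤ k → k ≤ π.l - 1 → 0 < π.topSumR τ k := by
    intro k h1 h2; rw [htopR]; exact htopim k h1 h2
  have hBneg : ∀ k, 1 ≤ k → k ≤ π.m - 1 → π.botSumR τ k < 0 := by
    intro k h1 h2; rw [hbotR]; exact hbotim k h1 h2
  have hT0 : π.topSumR τ 0 = 0 := by
    rw [GenPerm.topSumR, Finset.Icc_eq_empty (by omega)]; simp
  have hB0 : π.botSumR τ 0 = 0 := by
    rw [GenPerm.botSumR, Finset.Icc_eq_empty (by omega)]; simp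
  have hTnn : ∀ k, k ≤ π.l → 0 ≤ π.topSumR τ k := by
    intro k hk
    rcases Nat.eq_zero_or_pos k with rfl | hk1
    · rw [hT0]
    · rcases eq_or_lt_of_le hk with rfl | hlt
      · rw [hTl]
      · exact le_of_lt (hTpos k hk1 (by omega))
  have hBnp : ∀ k, k ≤ π.m → π.botSumR τ k ≤ 0 := by
    intro k hk
    rcases Nat.eq_zero_or_pos k with rfl | hk1
    · rw [hB0]
    · rcases eq_or_lt_of_le hk with rfl | hlt
      · rw [hBm]
      · exact le_of_lt (hBneg k hk1 (by omega))
  intro As Bs Cs Ds i1 i2 i3 i4 dAB dAC dAD dBC dBD dCD h12 h2l hl3 h34 h4s e1 e2 e3 e4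
  have hsize : π.size = π.l + π.m := rfl
  have hl4 : π.l ≤ i4 := le_trans hl3 h34
  -- turn the four segment identities into real equations
  have s1 : π.topSumR τ i1 = (∑ a ∈ As, τ a) + ∑ a ∈ Bs, τ a := by
    have := congrArg (fun s => (Multiset.map τ s).sum) e1
    simpa [seg_sum, Multiset.map_add, Multiset.sum_add, finset_sum_val, GenPerm.topSumR]
      using this
  have s2 : π.topSumR τ i2 + ((∑ a ∈ Ds, τ a) + ∑ a ∈ Bs, τ a) = π.topSumR τ π.l := by
    have h := congrArg (fun s => (Multiset.map τ s).sum) e2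
    simp only [seg_sum, Multiset.map_add, Multiset.sum_add, finset_sum_val] at h
    rw [← h, topSumR_eq, topSumR_eq, show Finset.Icc (i2+1) π.l = Finset.Ioc i2 π.l from
      Finset.Icc_add_one_left_eq_Ioc i2 π.l]
    exact Finset.sum_Ioc_consecutive _ (Nat.zero_le i2) h2l
  have s3 : π.botSumR τ (i3 - π.l) = (∑ a ∈ As, τ a) + ∑ a ∈ Cs, τ a := by
    have h := congrArg (fun s => (Multiset.map τ s).sum) e3
    simp only [seg_sum, Multiset.map_add, Multiset.sum_add, finset_sum_val] at h
    rw [botSumR_eq, show π.l + (i3 - π.l) = i3 by omega,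
      show Finset.Ioc π.l i3 = Finset.Icc (π.l+1) i3 from (Finset.Icc_add_one_left_eq_Ioc π.l i3).symm]
    exact h
  have s4 : π.botSumR τ (i4 - π.l) + ((∑ a ∈ Ds, τ a) + ∑ a ∈ Cs, τ a) = π.botSumR τ π.m := by
    have h := congrArg (fun s => (Multiset.map τ s).sum) e4
    simp only [seg_sum, Multiset.map_add, Multiset.sum_add, finset_sum_val] at h
    rw [← h, botSumR_eq, botSumR_eq, show π.l + (i4 - π.l) = i4 by omega,
      show Finset.Icc (i4+1) π.size = Finset.Ioc i4 π.size from Finset.Icc_add_one_left_eq_Ioc i4 π.size,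
      show π.l + π.m = π.size from rfl]
    exact Finset.sum_Ioc_consecutive _ (by omega) (by omega)
  have hi3m : i3 - π.l ≤ π.m := by omega
  have hi4m : i4 - π.l ≤ π.m := by omega
  have t1 := hTnn i1 (by omega)
  have t2 := hTnn i2 h2l
  have b3 := hBnp (i3 - π.l) hi3m
  have b4 := hBnp (i4 - π.l) hi4m
  rw [hTl] at s2
  rw [hBm] at s4
  -- all four partial sums vanish
  have hz1 : π.topSumR τ i1 = 0 := by linarith
  have hz2 : π.topSumR τ i2 = 0 := by linarith
  have hz3 : π.botSumR τ (i3 - π.l) = 0 := by linarith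
  have hz4 : π.botSumR τ (i4 - π.l) = 0 := by linarith
  -- deduce the indices are extremal
  have hi1 : i1 = 0 := by
    by_contra h
    rcases Nat.lt_or_ge i1 π.l with hlt | hge
    · exact absurd hz1 (ne_of_gt (hTpos i1 (by omega) (by omega)))
    · have : i1 = π.l := by omega
      subst this
      exact not_seg_top_eq π hconv dAB e1
  have hi2 : i2 = π.l := by
    by_contra h
    rcases Nat.eq_zero_or_pos i2 with h0 | hpos
    · subst h0
      exact not_seg_top_eq π hconv dBD.symm (by simpa using e2)
    · exact absurd hz2 (ne_of_gt (hTpos i2 (by omega) (by omega)))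
  have hi3 : i3 = π.l := by
    by_contra h
    rcases Nat.lt_or_ge (i3 - π.l) π.m with hlt | hge
    · exact absurd hz3 (ne_of_lt (hBneg (i3 - π.l) (by omega) (by omega)))
    · have : i3 = π.size := by omega
      subst this
      exact not_seg_bot_eq π hconv dAC e3
  have hi4 : i4 = π.size := by
    by_contra h
    rcases Nat.eq_zero_or_pos (i4 - π.l) with h0 | hpos
    · have : i4 = π.l := by omega
      subst this
      exact not_seg_bot_eq π hconv dCD.symm (by simpa using e4)
    · exact absurd hz4 (ne_of_lt (hBneg (i4 - π.l) (by omega) (by omega)))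
  refine ⟨?_, ?_, ?_, ?_⟩
  · rw [hi1]; exact seg_empty π (by omega)
  · rw [hi2]; exact seg_empty π (by omega)
  · rw [hi3]; exact seg_empty π (by omega)
  · rw [hi4]; exact seg_empty π (by omega)

end Forward
section Lambda

open Finset GenPerm

variable {A : Type*} [DecidableEq A] (π : GenPerm A)

lemma sum_fiber_top [Fintype A] (f : A → ℝ) :
    π.topSumR f π.l = ∑ a, (tcnt π a : ℝ) * f a := by
  rw [GenPerm.topSumR,
    ← Finset.sum_fiberwise_of_maps_to (g := π.p) (t := Finset.univ)
      (fun i _ => Finset.mem_univ _) (fun i => f (π.p i))]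
  refine Finset.sum_congr rfl (fun a _ => ?_)
  have : ∀ i ∈ (Finset.Icc 1 π.l).filter (fun i => π.p i = a), f (π.p i) = f a := by
    intro i hi
    rw [(Finset.mem_filter.mp hi).2]
  rw [Finset.sum_congr rfl this, Finset.sum_const, nsmul_eq_mul]
  rfl

lemma sum_fiber_bot [Fintype A] (f : A → ℝ) :
    π.botSumR f π.m = ∑ a, (bcnt π a : ℝ) * f a := by
  rw [GenPerm.botSumR,
    ← Finset.sum_fiberwise_of_maps_to (g := fun j => π.p (π.l + j)) (t := Finset.univ)
      (fun i _ => Finset.mem_univ _) (fun j => f (π.p (π.l + j)))]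
  refine Finset.sum_congr rfl (fun a _ => ?_)
  have : ∀ j ∈ (Finset.Icc 1 π.m).filter (fun j => π.p (π.l + j) = a),
      f (π.p (π.l + j)) = f a := by
    intro j hj
    rw [(Finset.mem_filter.mp hj).2]
  rw [Finset.sum_congr rfl this, Finset.sum_const, nsmul_eq_mul]
  rfl

lemma tcnt_le_two (a : A) : tcnt π a ≤ 2 := by
  have := tcnt_add_bcnt π a; omega

lemma exists_n2 (hconv : π.Convention) : ∃ a, tcnt π a = 2 := by
  obtain ⟨⟨i, j, ⟨h1, _, h3, _, h5, h6⟩, hi, hj⟩, _⟩ := hconv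
  refine ⟨π.p i, ?_⟩
  have hsub : ({i, j} : Finset ℕ) ⊆ tOcc π (π.p i) := by
    intro x hx
    simp only [Finset.mem_insert, Finset.mem_singleton] at hx
    rcases hx with rfl | rfl
    · rw [tOcc, Finset.mem_filter, Finset.mem_Icc]
      exact ⟨⟨by omega, by omega⟩, rfl⟩
    · rw [tOcc, Finset.mem_filter, Finset.mem_Icc]
      exact ⟨⟨by omega, by omega⟩, h6.symm⟩
  have h2 := Finset.card_le_card hsub
  rw [Finset.card_pair h5] at h2
  have := tcnt_le_two π (π.p i)
  rw [tcnt] at *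
  omega

lemma exists_n0 (hconv : π.Convention) : ∃ a, tcnt π a = 0 := by
  obtain ⟨_, ⟨i, j, ⟨h1, h2, h3, h4, h5, h6⟩, hi, hj⟩⟩ := hconv
  have hsize : π.size = π.l + π.m := rfl
  refine ⟨π.p i, ?_⟩
  have hsub : ({i - π.l, j - π.l} : Finset ℕ) ⊆ bOcc π (π.p i) := by
    intro x hx
    simp only [Finset.mem_insert, Finset.mem_singleton] at hx
    rcases hx with rfl | rfl
    · rw [bOcc, Finset.mem_filter, Finset.mem_Icc]
      refine ⟨⟨by omega, by omega⟩, ?_⟩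
      rw [show π.l + (i - π.l) = i by omega]
    · rw [bOcc, Finset.mem_filter, Finset.mem_Icc]
      refine ⟨⟨by omega, by omega⟩, ?_⟩
      rw [show π.l + (j - π.l) = j by omega]
      exact h6.symm
  have hc := Finset.card_le_card hsub
  rw [Finset.card_pair (by omega : i - π.l ≠ j - π.l)] at hc
  have := tcnt_add_bcnt π (π.p i)
  rw [bcnt] at this
  omega

lemma exists_lambda [Fintype A] (hconv : π.Convention) :
    ∃ lam : A → ℝ, (∀ a, 0 < lam a) ∧ π.topSumR lam π.l = π.botSumR lam π.m := by
  classical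
  set n2 : ℕ := (Finset.univ.filter (fun a => tcnt π a = 2)).card with hn2
  set n0 : ℕ := (Finset.univ.filter (fun a => tcnt π a = 0)).card with hn0
  have hn2pos : 0 < n2 := by
    obtain ⟨a, ha⟩ := exists_n2 π hconv
    rw [hn2, Finset.card_pos]
    exact ⟨a, Finset.mem_filter.mpr ⟨Finset.mem_univ a, ha⟩⟩
  have hn0pos : 0 < n0 := by
    obtain ⟨a, ha⟩ := exists_n0 π hconv
    rw [hn0, Finset.card_pos]
    exact ⟨a, Finset.mem_filter.mpr ⟨Finset.mem_univ a, ha⟩⟩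
  set lam : A → ℝ := fun a =>
    if tcnt π a = 2 then (n0 : ℝ) else if tcnt π a = 0 then (n2 : ℝ) else 1 with hlam
  refine ⟨lam, ?_, ?_⟩
  · intro a
    rw [hlam]
    by_cases h2 : tcnt π a = 2
    · simp only [h2, if_true]
      exact_mod_cast hn0pos
    · by_cases h0 : tcnt π a = 0
      · simp only [h2, h0, if_false, if_true]
        exact_mod_cast hn2pos
      · simp [h2, h0]
  · rw [sum_fiber_top, sum_fiber_bot]
    have key : ∀ a : A, (tcnt π a : ℝ) * lam a - (bcnt π a : ℝ) * lam a
        = (if tcnt π a = 2 then (2*(n0:ℝ)) else 0)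
          + (if tcnt π a = 0 then (-(2*(n2:ℝ))) else 0) := by
      intro a
      have h2 := tcnt_add_bcnt π a
      rcases (by omega : tcnt π a = 0 ∨ tcnt π a = 1 ∨ tcnt π a = 2) with h | h | h
      · have hb : bcnt π a = 2 := by omega
        rw [hlam]
        simp only [h, hb]
        norm_num
      · have hb : bcnt π a = 1 := by omega
        rw [hlam]
        simp only [h, hb]
        norm_num
      · have hb : bcnt π a = 0 := by omega
        rw [hlam]
        simp only [h, hb]
        norm_num
    have hsum : ∑ a : A, ((tcnt π a : ℝ) * lam a - (bcnt π a : ℝ) * lam a) = 0 := by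
      rw [Finset.sum_congr rfl (fun a _ => key a), Finset.sum_add_distrib,
        ← Finset.sum_filter, ← Finset.sum_filter, Finset.sum_const, Finset.sum_const,
        ← hn2, ← hn0, nsmul_eq_mul, nsmul_eq_mul]
      ring
    rw [Finset.sum_sub_distrib] at hsum
    linarith
end Lambda
section Abel

open Finset

variable {A : Type*} [DecidableEq A]

/-- Abel summation: weighted sum of prefix-counts equals sum over occurrences of tail sums. -/
lemma abel_sum (c : ℕ → ℝ) (q : ℕ → A) (a : A) (n : ℕ) :
    ∑ k ∈ Finset.Icc 1 (n-1), c k * (((Finset.Icc 1 k).filter (fun i => q i = a)).card : ℝ)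
      = ∑ p ∈ (Finset.Icc 1 n).filter (fun i => q i = a), ∑ k ∈ Finset.Icc p (n-1), c k := by
  have h1 : ∀ k ∈ Finset.Icc 1 (n-1),
      c k * (((Finset.Icc 1 k).filter (fun i => q i = a)).card : ℝ)
        = ∑ p ∈ (Finset.Icc 1 n).filter (fun i => q i = a), (if p ≤ k then c k else 0) := by
    intro k hk
    have hk' := Finset.mem_Icc.mp hk
    have hfeq : (Finset.Icc 1 k).filter (fun i => q i = a)
        = ((Finset.Icc 1 n).filter (fun i => q i = a)).filter (fun p => p ≤ k) := by
      ext i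
      simp only [Finset.mem_filter, Finset.mem_Icc]
      constructor
      · rintro ⟨⟨ha1, ha2⟩, ha3⟩
        exact ⟨⟨⟨ha1, by omega⟩, ha3⟩, ha2⟩
      · rintro ⟨⟨⟨hb1, hb2⟩, hb3⟩, hb4⟩
        exact ⟨⟨hb1, hb4⟩, hb3⟩
    rw [← Finset.sum_filter, Finset.sum_const, nsmul_eq_mul, hfeq, mul_comm]
  rw [Finset.sum_congr rfl h1, Finset.sum_comm]
  refine Finset.sum_congr rfl (fun p hp => ?_)
  have hp1 : 1 ≤ p := by
    have := (Finset.mem_Icc.mp (Finset.mem_filter.mp hp).1).1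
    omega
  rw [← Finset.sum_filter]
  congr 1
  ext k
  simp only [Finset.mem_filter, Finset.mem_Icc]
  omega

variable (π : GenPerm A)

/-- The top partial sum as a linear functional. -/
noncomputable def TLin (k : ℕ) : (A → ℝ) →ₗ[ℝ] ℝ where
  toFun := fun τ => π.topSumR τ k
  map_add' := by intros; simp [GenPerm.topSumR, Finset.sum_add_distrib]
  map_smul' := by intros; simp [GenPerm.topSumR, Finset.mul_sum]

/-- The bottom partial sum as a linear functional. -/
noncomputable def BLin (k : ℕ) : (A → ℝ) →ₗ[ℝ] ℝ where
  toFun := fun τ => π.botSumR τ k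
  map_add' := by intros; simp [GenPerm.botSumR, Finset.sum_add_distrib]
  map_smul' := by intros; simp [GenPerm.botSumR, Finset.mul_sum]

@[simp] lemma TLin_apply (k : ℕ) (τ : A → ℝ) : TLin π k τ = π.topSumR τ k := rfl
@[simp] lemma BLin_apply (k : ℕ) (τ : A → ℝ) : BLin π k τ = π.botSumR τ k := rfl

lemma topSumR_single (a : A) (k : ℕ) :
    π.topSumR (Pi.single a 1) k = (((Finset.Icc 1 k).filter (fun i => π.p i = a)).card : ℝ) := by
  rw [GenPerm.topSumR, ← Finset.sum_boole]
  refine Finset.sum_congr rfl (fun i _ => ?_)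
  rw [Pi.single_apply]

lemma botSumR_single (a : A) (k : ℕ) :
    π.botSumR (Pi.single a 1) k
      = (((Finset.Icc 1 k).filter (fun j => π.p (π.l + j) = a)).card : ℝ) := by
  rw [GenPerm.botSumR, ← Finset.sum_boole]
  refine Finset.sum_congr rfl (fun i _ => ?_)
  rw [Pi.single_apply]

end Abel
section Main

open Finset GenPerm

variable {A : Type*} [DecidableEq A]

set_option maxHeartbeats 2000000 in
theorem exists_strict (π : GenPerm A) (hconv : π.Convention) (hSI : π.StronglyIrreducible) :
    ∃ τ : A → ℝ, (∀ k, 1 ≤ k → k ≤ π.l - 1 → 0 < π.topSumR τ k) ∧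
      (∀ k, 1 ≤ k → k ≤ π.m - 1 → π.botSumR τ k < 0) ∧
      π.topSumR τ π.l = 0 ∧ π.botSumR τ π.m = 0 := by
  classical
  haveI : Fintype A := fintypeOf π
  have hl2 := conv_l2 π hconv
  have hm2 := conv_m2 π hconv
  have hsize : π.size = π.l + π.m := rfl
  by_contra hne
  set K := ({x // x ∈ Finset.Icc 1 (π.l - 1)} ⊕ {x // x ∈ Finset.Icc 1 (π.m - 1)}) with hK
  set Lmap : (A → ℝ) →ₗ[ℝ] (K → ℝ) :=
    LinearMap.pi (fun j => Sum.rec (fun k => TLin π k.1) (fun k => -BLin π k.1) j) with hLmap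
  have hLapp_l : ∀ (τ : A → ℝ) (k : {x // x ∈ Finset.Icc 1 (π.l - 1)}),
      Lmap τ (Sum.inl k) = π.topSumR τ k.1 := fun τ k => rfl
  have hLapp_r : ∀ (τ : A → ℝ) (k : {x // x ∈ Finset.Icc 1 (π.m - 1)}),
      Lmap τ (Sum.inr k) = - π.botSumR τ k.1 := fun τ k => rfl
  set V : Submodule ℝ (A → ℝ) := LinearMap.ker (TLin π π.l) ⊓ LinearMap.ker (BLin π π.m)
    with hV
  set W : Submodule ℝ (K → ℝ) := Submodule.map Lmap V with hW
  have hdisj : ∀ x ∈ W, ¬ (∀ j, 0 < x j) := by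
    intro x hx hpos
    obtain ⟨τ, hτV, rfl⟩ := hx
    simp only [SetLike.mem_coe, hV, Submodule.mem_inf, LinearMap.mem_ker] at hτV
    refine hne ⟨τ, ?_, ?_, hτV.1, hτV.2⟩
    · intro k h1 h2
      have := hpos (Sum.inl ⟨k, Finset.mem_Icc.mpr ⟨h1, h2⟩⟩)
      rwa [hLapp_l] at this
    · intro k h1 h2
      have := hpos (Sum.inr ⟨k, Finset.mem_Icc.mpr ⟨h1, h2⟩⟩)
      rw [hLapp_r] at this
      linarith
  obtain ⟨y, hynn, hyne, hyorth⟩ := stiemke W hdisj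
  set yT : ℕ → ℝ := fun k =>
    if h : k ∈ Finset.Icc 1 (π.l - 1) then y (Sum.inl ⟨k, h⟩) else 0 with hyT
  set yB : ℕ → ℝ := fun k =>
    if h : k ∈ Finset.Icc 1 (π.m - 1) then y (Sum.inr ⟨k, h⟩) else 0 with hyB
  have hyTnn : ∀ k, 0 ≤ yT k := by
    intro k; rw [hyT]; dsimp only; split
    · exact hynn _
    · exact le_refl 0
  have hyBnn : ∀ k, 0 ≤ yB k := by
    intro k; rw [hyB]; dsimp only; split
    · exact hynn _
    · exact le_refl 0
  have hyTa : ∀ a : {x // x ∈ Finset.Icc 1 (π.l - 1)}, yT a.1 = y (Sum.inl a) := by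
    intro a; rw [hyT]; dsimp only; rw [dif_pos a.2]
  have hyBa : ∀ a : {x // x ∈ Finset.Icc 1 (π.m - 1)}, yB a.1 = y (Sum.inr a) := by
    intro a; rw [hyB]; dsimp only; rw [dif_pos a.2]
  -- the certificate as an identity of sums over the constraint intervals
  have hφ0 : ∀ τ : A → ℝ, π.topSumR τ π.l = 0 → π.botSumR τ π.m = 0 →
      (∑ k ∈ Finset.Icc 1 (π.l - 1), yT k * π.topSumR τ k)
        - (∑ k ∈ Finset.Icc 1 (π.m - 1), yB k * π.botSumR τ k) = 0 := by
    intro τ h1 h2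
    have hWmem : Lmap τ ∈ W := by
      rw [hW]
      exact Submodule.mem_map_of_mem (by
        rw [hV, Submodule.mem_inf, LinearMap.mem_ker, LinearMap.mem_ker]
        exact ⟨h1, h2⟩)
    have horth := hyorth _ hWmem
    rw [Fintype.sum_sum_type] at horth
    have hL : ∑ a : {x // x ∈ Finset.Icc 1 (π.l - 1)},
        y (Sum.inl a) * Lmap τ (Sum.inl a)
          = ∑ k ∈ Finset.Icc 1 (π.l - 1), yT k * π.topSumR τ k := by
      rw [← Finset.sum_coe_sort (Finset.Icc 1 (π.l-1)) (fun k => yT k * π.topSumR τ k)]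
      refine Finset.sum_congr rfl (fun a _ => ?_)
      rw [hLapp_l, hyTa]
    have hR : ∑ a : {x // x ∈ Finset.Icc 1 (π.m - 1)},
        y (Sum.inr a) * Lmap τ (Sum.inr a)
          = - ∑ k ∈ Finset.Icc 1 (π.m - 1), yB k * π.botSumR τ k := by
      rw [← Finset.sum_neg_distrib,
        ← Finset.sum_coe_sort (Finset.Icc 1 (π.m-1)) (fun k => -(yB k * π.botSumR τ k))]
      refine Finset.sum_congr rfl (fun a _ => ?_)
      rw [hLapp_r, hyBa]
      ring
    rw [hL, hR] at horth
    linarith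
  -- bundle the certificate functional and decompose it over the two equality functionals
  set φ : (A → ℝ) →ₗ[ℝ] ℝ :=
    (∑ k ∈ Finset.Icc 1 (π.l - 1), yT k • TLin π k)
      - (∑ k ∈ Finset.Icc 1 (π.m - 1), yB k • BLin π k) with hφ
  have hφapp : ∀ x, φ x = (∑ k ∈ Finset.Icc 1 (π.l - 1), yT k * π.topSumR x k)
      - (∑ k ∈ Finset.Icc 1 (π.m - 1), yB k * π.botSumR x k) := by
    intro x
    rw [hφ]
    simp [LinearMap.sub_apply, LinearMap.sum_apply, LinearMap.smul_apply, smul_eq_mul]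
  obtain ⟨s, t, hst⟩ := span_two (TLin π π.l) (BLin π π.m) φ (by
    intro x h1 h2
    rw [hφapp]
    exact hφ0 x (by simpa using h1) (by simpa using h2))
  -- position weights
  set g : ℕ → ℝ := fun p => (∑ k ∈ Finset.Icc p (π.l - 1), yT k) - s with hg
  set h' : ℕ → ℝ := fun q => (∑ k ∈ Finset.Icc q (π.m - 1), yB k) + t with hh'
  set σT : A → ℝ := fun a => ∑ p ∈ tOcc π a, g p with hσT
  -- the key per-letter identity
  have KI : ∀ a : A, σT a = ∑ q ∈ bOcc π a, h' q := by
    intro a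
    have hIa := hst (Pi.single a 1)
    rw [hφapp] at hIa
    simp only [TLin_apply, BLin_apply, topSumR_single, botSumR_single] at hIa
    rw [abel_sum yT π.p a π.l, abel_sum yB (fun j => π.p (π.l + j)) a π.m] at hIa
    have htO : (Finset.Icc 1 π.l).filter (fun i => π.p i = a) = tOcc π a := rfl
    have hbO : (Finset.Icc 1 π.m).filter (fun i => π.p (π.l + i) = a) = bOcc π a := rfl
    rw [htO, hbO] at hIa
    have h1 : σT a = (∑ p ∈ tOcc π a, ∑ k ∈ Finset.Icc p (π.l - 1), yT k)
        - (tcnt π a : ℝ) * s := by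
      rw [hσT]
      dsimp only
      rw [hg]
      dsimp only
      rw [Finset.sum_sub_distrib, Finset.sum_const, nsmul_eq_mul]
      rfl
    have h2 : ∑ q ∈ bOcc π a, h' q
        = (∑ q ∈ bOcc π a, ∑ k ∈ Finset.Icc q (π.m - 1), yB k) + (bcnt π a : ℝ) * t := by
      rw [hh']
      dsimp only
      rw [Finset.sum_add_distrib, Finset.sum_const, nsmul_eq_mul]
      rfl
    rw [h1, h2]
    have e1 : tcnt π a = (tOcc π a).card := rfl
    have e2 : bcnt π a = (bOcc π a).card := rfl
    rw [e1, e2]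
    linarith
  -- monotonicity of the weights
  have hganti : ∀ p p', p ≤ p' → g p' ≤ g p := by
    intro p p' hpp
    rw [hg]
    dsimp only
    have := Finset.sum_le_sum_of_subset_of_nonneg
      (Finset.Icc_subset_Icc hpp (le_refl (π.l - 1)))
      (fun k _ _ => hyTnn k)
    linarith
  have hh'anti : ∀ q q', q ≤ q' → h' q' ≤ h' q := by
    intro q q' hqq
    rw [hh']
    dsimp only
    have := Finset.sum_le_sum_of_subset_of_nonneg
      (Finset.Icc_subset_Icc hqq (le_refl (π.m - 1)))
      (fun k _ _ => hyBnn k)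
    linarith
  -- some position carries a nonzero weight
  have hkey : (∃ p, 1 ≤ p ∧ p ≤ π.l ∧ g p ≠ 0) ∨ (∃ q, 1 ≤ q ∧ q ≤ π.m ∧ h' q ≠ 0) := by
    obtain ⟨j₀, hj₀⟩ := hyne
    rcases j₀ with a | a
    · left
      have ha := Finset.mem_Icc.mp a.2
      have hstep : g a.1 = yT a.1 + g (a.1 + 1) := by
        rw [hg]
        dsimp only
        rw [Icc_sum_succ_bot yT ha.2]
        ring
      have hyne' : yT a.1 ≠ 0 := by rw [hyTa]; exact hj₀
      by_cases hz : g (a.1 + 1) = 0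
      · exact ⟨a.1, ha.1, by omega, by rw [hstep, hz]; simpa using hyne'⟩
      · exact ⟨a.1 + 1, by omega, by omega, hz⟩
    · right
      have ha := Finset.mem_Icc.mp a.2
      have hstep : h' a.1 = yB a.1 + h' (a.1 + 1) := by
        rw [hh']
        dsimp only
        rw [Icc_sum_succ_bot yB ha.2]
        ring
      have hyne' : yB a.1 ≠ 0 := by rw [hyBa]; exact hj₀
      by_cases hz : h' (a.1 + 1) = 0
      · exact ⟨a.1, ha.1, by omega, by rw [hstep, hz]; simpa using hyne'⟩
      · exact ⟨a.1 + 1, by omega, by omega, hz⟩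
  -- corner filters
  set FP := (Finset.Icc 1 π.l).filter (fun p => 0 < g p) with hFPdef
  set FN := (Finset.Icc 1 π.l).filter (fun p => g p < 0) with hFNdef
  set GP := (Finset.Icc 1 π.m).filter (fun q => 0 < h' q) with hGPdef
  set GN := (Finset.Icc 1 π.m).filter (fun q => h' q < 0) with hGNdef
  have hFP : FP = Finset.Icc 1 FP.card := by
    have hsub : FP ⊆ Finset.Icc (0+1) π.l := Finset.filter_subset _ _
    have hdc : ∀ p ∈ FP, ∀ x, 0+1 ≤ x → x ≤ p → x ∈ FP := by
      intro p hp x h1 h2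
      rw [hFPdef, Finset.mem_filter, Finset.mem_Icc] at hp ⊢
      exact ⟨⟨by omega, by omega⟩, lt_of_lt_of_le hp.2 (hganti x p h2)⟩
    simpa using downClosed_eq_Icc hsub hdc
  have hFN : FN = Finset.Icc (π.l - FN.card + 1) π.l := by
    have hsub : FN ⊆ Finset.Icc (0+1) π.l := Finset.filter_subset _ _
    have huc : ∀ p ∈ FN, ∀ x, p ≤ x → x ≤ π.l → x ∈ FN := by
      intro p hp x h1 h2
      rw [hFNdef, Finset.mem_filter, Finset.mem_Icc] at hp ⊢
      exact ⟨⟨by omega, by omega⟩, lt_of_le_of_lt (hganti p x h1) hp.2⟩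
    simpa using upClosed_eq_Icc hsub huc
  have hGP : GP = Finset.Icc 1 GP.card := by
    have hsub : GP ⊆ Finset.Icc (0+1) π.m := Finset.filter_subset _ _
    have hdc : ∀ q ∈ GP, ∀ x, 0+1 ≤ x → x ≤ q → x ∈ GP := by
      intro q hq x h1 h2
      rw [hGPdef, Finset.mem_filter, Finset.mem_Icc] at hq ⊢
      exact ⟨⟨by omega, by omega⟩, lt_of_lt_of_le hq.2 (hh'anti x q h2)⟩
    simpa using downClosed_eq_Icc hsub hdc
  have hGN : GN = Finset.Icc (π.m - GN.card + 1) π.m := by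
    have hsub : GN ⊆ Finset.Icc (0+1) π.m := Finset.filter_subset _ _
    have huc : ∀ q ∈ GN, ∀ x, q ≤ x → x ≤ π.m → x ∈ GN := by
      intro q hq x h1 h2
      rw [hGNdef, Finset.mem_filter, Finset.mem_Icc] at hq ⊢
      exact ⟨⟨by omega, by omega⟩, lt_of_le_of_lt (hh'anti q x h1) hq.2⟩
    simpa using upClosed_eq_Icc hsub huc
  have hFPN : FP.card + FN.card ≤ π.l := by
    have hdisjF : Disjoint FP FN := by
      rw [Finset.disjoint_left]
      intro p h1 h2
      rw [hFPdef, Finset.mem_filter] at h1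
      rw [hFNdef, Finset.mem_filter] at h2
      linarith [h1.2, h2.2]
    have h1 := Finset.card_le_card
      (Finset.union_subset (Finset.filter_subset _ (Finset.Icc 1 π.l))
        (Finset.filter_subset _ (Finset.Icc 1 π.l)) :
        FP ∪ FN ⊆ Finset.Icc 1 π.l)
    rw [Finset.card_union_of_disjoint hdisjF, Nat.card_Icc] at h1
    omega
  have hGPN : GP.card + GN.card ≤ π.m := by
    have hdisjG : Disjoint GP GN := by
      rw [Finset.disjoint_left]
      intro q h1 h2
      rw [hGPdef, Finset.mem_filter] at h1
      rw [hGNdef, Finset.mem_filter] at h2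
      linarith [h1.2, h2.2]
    have h1 := Finset.card_le_card
      (Finset.union_subset (Finset.filter_subset _ (Finset.Icc 1 π.m))
        (Finset.filter_subset _ (Finset.Icc 1 π.m)) :
        GP ∪ GN ⊆ Finset.Icc 1 π.m)
    rw [Finset.card_union_of_disjoint hdisjG, Nat.card_Icc] at h1
    omega
  -- indices
  set i1 := FP.card with hi1
  set i2 := π.l - FN.card with hi2
  set i3 := π.l + GP.card with hi3
  set i4 := π.size - GN.card with hi4
  -- corner letter sets
  set As := Finset.univ.filter (fun a => tcnt π a = 1 ∧ 0 < σT a) with hAsdef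
  set Ds := Finset.univ.filter (fun a => tcnt π a = 1 ∧ σT a < 0) with hDsdef
  set Bs := Finset.univ.filter (fun a => tcnt π a = 2 ∧ ∃ p ∈ tOcc π a, g p ≠ 0) with hBsdef
  set Cs := Finset.univ.filter (fun a => tcnt π a = 0 ∧ ∃ q ∈ bOcc π a, h' q ≠ 0) with hCsdef
  have hmemAs : ∀ a, a ∈ As ↔ (tcnt π a = 1 ∧ 0 < σT a) := by
    intro a; rw [hAsdef, Finset.mem_filter]; simp
  have hmemDs : ∀ a, a ∈ Ds ↔ (tcnt π a = 1 ∧ σT a < 0) := by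
    intro a; rw [hDsdef, Finset.mem_filter]; simp
  have hmemBs : ∀ a, a ∈ Bs ↔ (tcnt π a = 2 ∧ ∃ p ∈ tOcc π a, g p ≠ 0) := by
    intro a; rw [hBsdef, Finset.mem_filter]; simp
  have hmemCs : ∀ a, a ∈ Cs ↔ (tcnt π a = 0 ∧ ∃ q ∈ bOcc π a, h' q ≠ 0) := by
    intro a; rw [hCsdef, Finset.mem_filter]; simp
  have htc : ∀ a, tcnt π a = 0 ∨ tcnt π a = 1 ∨ tcnt π a = 2 := by
    intro a; have := tcnt_add_bcnt π a; omega
  -- four count identities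
  have C1 : ∀ a, ((tOcc π a).filter (fun p => 0 < g p)).card
      = (if a ∈ As then 1 else 0) + (if a ∈ Bs then 1 else 0) := by
    intro a
    have hAs2 : a ∈ As → tcnt π a = 1 := fun h => ((hmemAs a).mp h).1
    have hBs2 : a ∈ Bs → tcnt π a = 2 := fun h => ((hmemBs a).mp h).1
    rcases htc a with h0 | h1 | h2
    · rw [Finset.card_eq_zero.mp h0]
      rw [if_neg (fun h => by have := hAs2 h; omega : ¬ a ∈ As), if_neg (fun h => by have := hBs2 h; omega : ¬ a ∈ Bs)]
      simp
    · obtain ⟨p₀, hp₀⟩ := Finset.card_eq_one.mp h1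
      have hσ : σT a = g p₀ := by
        rw [hσT]; dsimp only; rw [hp₀, Finset.sum_singleton]
      have hBs : a ∉ Bs := fun h => by have := hBs2 h; omega
      rw [hp₀, Finset.filter_singleton, if_neg hBs]
      by_cases hpos : 0 < g p₀
      · rw [if_pos hpos, if_pos ((hmemAs a).mpr ⟨h1, by rw [hσ]; exact hpos⟩)]
        simp
      · rw [if_neg hpos, if_neg (fun h => hpos (by rw [← hσ]; exact ((hmemAs a).mp h).2))]
        simp
    · obtain ⟨p₁, p₂, hne12, hpair⟩ := Finset.card_eq_two.mp h2
      have hb0 : bOcc π a = ∅ := Finset.card_eq_zero.mp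
        (by have := tcnt_add_bcnt π a; omega : bcnt π a = 0)
      have hsum : g p₁ + g p₂ = 0 := by
        have hk := KI a
        rw [hb0, Finset.sum_empty, hσT] at hk
        dsimp only at hk
        rw [hpair, Finset.sum_pair hne12] at hk
        exact hk
      have hAs : a ∉ As := fun h => by have := hAs2 h; omega
      rw [hpair, show (({p₁, p₂} : Finset ℕ).filter (fun p => 0 < g p)).card
          = (if 0 < g p₁ then 1 else 0) + (if 0 < g p₂ then 1 else 0) by
        rw [Finset.card_filter, Finset.sum_pair hne12], if_neg hAs]
      by_cases hz : g p₁ = 0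
      · have hz2 : g p₂ = 0 := by linarith
        have hBs : a ∉ Bs := by
          intro h
          obtain ⟨p, hp, hpne⟩ := ((hmemBs a).mp h).2
          rw [hpair, Finset.mem_insert, Finset.mem_singleton] at hp
          rcases hp with rfl | rfl
          · exact hpne hz
          · exact hpne hz2
        rw [if_neg (by rw [hz]; exact lt_irrefl 0), if_neg (by rw [hz2]; exact lt_irrefl 0),
          if_neg hBs]
      · have hBs : a ∈ Bs := (hmemBs a).mpr
          ⟨h2, p₁, by rw [hpair]; exact Finset.mem_insert_self _ _, hz⟩
        rcases lt_or_gt_of_ne hz with hlt | hgt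
        · rw [if_neg (by linarith), if_pos (by linarith), if_pos hBs]
        · rw [if_pos hgt, if_neg (by linarith), if_pos hBs]
  have C2 : ∀ a, ((tOcc π a).filter (fun p => g p < 0)).card
      = (if a ∈ Ds then 1 else 0) + (if a ∈ Bs then 1 else 0) := by
    intro a
    have hDs2 : a ∈ Ds → tcnt π a = 1 := fun h => ((hmemDs a).mp h).1
    have hBs2 : a ∈ Bs → tcnt π a = 2 := fun h => ((hmemBs a).mp h).1
    rcases htc a with h0 | h1 | h2
    · rw [Finset.card_eq_zero.mp h0]
      rw [if_neg (fun h => by have := hDs2 h; omega : ¬ a ∈ Ds), if_neg (fun h => by have := hBs2 h; omega : ¬ a ∈ Bs)]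
      simp
    · obtain ⟨p₀, hp₀⟩ := Finset.card_eq_one.mp h1
      have hσ : σT a = g p₀ := by
        rw [hσT]; dsimp only; rw [hp₀, Finset.sum_singleton]
      have hBs : a ∉ Bs := fun h => by have := hBs2 h; omega
      rw [hp₀, Finset.filter_singleton, if_neg hBs]
      by_cases hneg : g p₀ < 0
      · rw [if_pos hneg, if_pos ((hmemDs a).mpr ⟨h1, by rw [hσ]; exact hneg⟩)]
        simp
      · rw [if_neg hneg, if_neg (fun h => hneg (by rw [← hσ]; exact ((hmemDs a).mp h).2))]
        simp
    · obtain ⟨p₁, p₂, hne12, hpair⟩ := Finset.card_eq_two.mp h2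
      have hb0 : bOcc π a = ∅ := Finset.card_eq_zero.mp
        (by have := tcnt_add_bcnt π a; omega : bcnt π a = 0)
      have hsum : g p₁ + g p₂ = 0 := by
        have hk := KI a
        rw [hb0, Finset.sum_empty, hσT] at hk
        dsimp only at hk
        rw [hpair, Finset.sum_pair hne12] at hk
        exact hk
      have hDs : a ∉ Ds := fun h => by have := hDs2 h; omega
      rw [hpair, show (({p₁, p₂} : Finset ℕ).filter (fun p => g p < 0)).card
          = (if g p₁ < 0 then 1 else 0) + (if g p₂ < 0 then 1 else 0) by
        rw [Finset.card_filter, Finset.sum_pair hne12], if_neg hDs]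
      by_cases hz : g p₁ = 0
      · have hz2 : g p₂ = 0 := by linarith
        have hBs : a ∉ Bs := by
          intro h
          obtain ⟨p, hp, hpne⟩ := ((hmemBs a).mp h).2
          rw [hpair, Finset.mem_insert, Finset.mem_singleton] at hp
          rcases hp with rfl | rfl
          · exact hpne hz
          · exact hpne hz2
        rw [if_neg (by rw [hz]; exact lt_irrefl 0), if_neg (by rw [hz2]; exact lt_irrefl 0),
          if_neg hBs]
      · have hBs : a ∈ Bs := (hmemBs a).mpr
          ⟨h2, p₁, by rw [hpair]; exact Finset.mem_insert_self _ _, hz⟩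
        rcases lt_or_gt_of_ne hz with hlt | hgt
        · rw [if_pos hlt, if_neg (by linarith), if_pos hBs]
        · rw [if_neg (by linarith), if_pos (by linarith), if_pos hBs]
  have C3 : ∀ a, ((bOcc π a).filter (fun q => 0 < h' q)).card
      = (if a ∈ As then 1 else 0) + (if a ∈ Cs then 1 else 0) := by
    intro a
    have hAs2 : a ∈ As → tcnt π a = 1 := fun h => ((hmemAs a).mp h).1
    have hCs2 : a ∈ Cs → tcnt π a = 0 := fun h => ((hmemCs a).mp h).1
    rcases htc a with h0 | h1 | h2
    · -- two occurrences on the bottom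
      have hb2 : bcnt π a = 2 := by have := tcnt_add_bcnt π a; omega
      obtain ⟨q₁, q₂, hne12, hpair⟩ := Finset.card_eq_two.mp hb2
      have ht0 : tOcc π a = ∅ := Finset.card_eq_zero.mp h0
      have hsum : h' q₁ + h' q₂ = 0 := by
        have hk := KI a
        rw [hσT] at hk
        dsimp only at hk
        rw [ht0, Finset.sum_empty, hpair, Finset.sum_pair hne12] at hk
        linarith
      have hAs : a ∉ As := fun h => by have := hAs2 h; omega
      rw [hpair, show (({q₁, q₂} : Finset ℕ).filter (fun q => 0 < h' q)).card
          = (if 0 < h' q₁ then 1 else 0) + (if 0 < h' q₂ then 1 else 0) by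
        rw [Finset.card_filter, Finset.sum_pair hne12], if_neg hAs]
      by_cases hz : h' q₁ = 0
      · have hz2 : h' q₂ = 0 := by linarith
        have hCs : a ∉ Cs := by
          intro h
          obtain ⟨q, hq, hqne⟩ := ((hmemCs a).mp h).2
          rw [hpair, Finset.mem_insert, Finset.mem_singleton] at hq
          rcases hq with rfl | rfl
          · exact hqne hz
          · exact hqne hz2
        rw [if_neg (by rw [hz]; exact lt_irrefl 0), if_neg (by rw [hz2]; exact lt_irrefl 0),
          if_neg hCs]
      · have hCs : a ∈ Cs := (hmemCs a).mpr
          ⟨h0, q₁, by rw [hpair]; exact Finset.mem_insert_self _ _, hz⟩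
        rcases lt_or_gt_of_ne hz with hlt | hgt
        · rw [if_neg (by linarith), if_pos (by linarith), if_pos hCs]
        · rw [if_pos hgt, if_neg (by linarith), if_pos hCs]
    · -- one occurrence on each line
      have hb1 : bcnt π a = 1 := by have := tcnt_add_bcnt π a; omega
      obtain ⟨q₀, hq₀⟩ := Finset.card_eq_one.mp hb1
      have hσ : σT a = h' q₀ := by
        have hk := KI a
        rw [hq₀, Finset.sum_singleton] at hk
        exact hk
      have hCs : a ∉ Cs := fun h => by have := hCs2 h; omega
      rw [hq₀, Finset.filter_singleton, if_neg hCs]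
      by_cases hpos : 0 < h' q₀
      · rw [if_pos hpos, if_pos ((hmemAs a).mpr ⟨h1, by rw [hσ]; exact hpos⟩)]
        simp
      · rw [if_neg hpos, if_neg (fun h => hpos (by rw [← hσ]; exact ((hmemAs a).mp h).2))]
        simp
    · have hb0 : bcnt π a = 0 := by have := tcnt_add_bcnt π a; omega
      rw [Finset.card_eq_zero.mp hb0]
      rw [if_neg (fun h => by have := hAs2 h; omega : ¬ a ∈ As), if_neg (fun h => by have := hCs2 h; omega : ¬ a ∈ Cs)]
      simp
  have C4 : ∀ a, ((bOcc π a).filter (fun q => h' q < 0)).card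
      = (if a ∈ Ds then 1 else 0) + (if a ∈ Cs then 1 else 0) := by
    intro a
    have hDs2 : a ∈ Ds → tcnt π a = 1 := fun h => ((hmemDs a).mp h).1
    have hCs2 : a ∈ Cs → tcnt π a = 0 := fun h => ((hmemCs a).mp h).1
    rcases htc a with h0 | h1 | h2
    · have hb2 : bcnt π a = 2 := by have := tcnt_add_bcnt π a; omega
      obtain ⟨q₁, q₂, hne12, hpair⟩ := Finset.card_eq_two.mp hb2
      have ht0 : tOcc π a = ∅ := Finset.card_eq_zero.mp h0
      have hsum : h' q₁ + h' q₂ = 0 := by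
        have hk := KI a
        rw [hσT] at hk
        dsimp only at hk
        rw [ht0, Finset.sum_empty, hpair, Finset.sum_pair hne12] at hk
        linarith
      have hDs : a ∉ Ds := fun h => by have := hDs2 h; omega
      rw [hpair, show (({q₁, q₂} : Finset ℕ).filter (fun q => h' q < 0)).card
          = (if h' q₁ < 0 then 1 else 0) + (if h' q₂ < 0 then 1 else 0) by
        rw [Finset.card_filter, Finset.sum_pair hne12], if_neg hDs]
      by_cases hz : h' q₁ = 0
      · have hz2 : h' q₂ = 0 := by linarith
        have hCs : a ∉ Cs := by
          intro h
          obtain ⟨q, hq, hqne⟩ := ((hmemCs a).mp h).2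
          rw [hpair, Finset.mem_insert, Finset.mem_singleton] at hq
          rcases hq with rfl | rfl
          · exact hqne hz
          · exact hqne hz2
        rw [if_neg (by rw [hz]; exact lt_irrefl 0), if_neg (by rw [hz2]; exact lt_irrefl 0),
          if_neg hCs]
      · have hCs : a ∈ Cs := (hmemCs a).mpr
          ⟨h0, q₁, by rw [hpair]; exact Finset.mem_insert_self _ _, hz⟩
        rcases lt_or_gt_of_ne hz with hlt | hgt
        · rw [if_pos hlt, if_neg (by linarith), if_pos hCs]
        · rw [if_neg (by linarith), if_pos (by linarith), if_pos hCs]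
    · have hb1 : bcnt π a = 1 := by have := tcnt_add_bcnt π a; omega
      obtain ⟨q₀, hq₀⟩ := Finset.card_eq_one.mp hb1
      have hσ : σT a = h' q₀ := by
        have hk := KI a
        rw [hq₀, Finset.sum_singleton] at hk
        exact hk
      have hCs : a ∉ Cs := fun h => by have := hCs2 h; omega
      rw [hq₀, Finset.filter_singleton, if_neg hCs]
      by_cases hneg : h' q₀ < 0
      · rw [if_pos hneg, if_pos ((hmemDs a).mpr ⟨h1, by rw [hσ]; exact hneg⟩)]
        simp
      · rw [if_neg hneg, if_neg (fun h => hneg (by rw [← hσ]; exact ((hmemDs a).mp h).2))]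
        simp
    · have hb0 : bcnt π a = 0 := by have := tcnt_add_bcnt π a; omega
      rw [Finset.card_eq_zero.mp hb0]
      rw [if_neg (fun h => by have := hDs2 h; omega : ¬ a ∈ Ds), if_neg (fun h => by have := hCs2 h; omega : ¬ a ∈ Cs)]
      simp
  have hGNle : GN.card ≤ π.m := by omega
  -- the four segment identities
  have e1 : π.seg 1 i1 = As.val + Bs.val := by
    refine Multiset.ext.mpr (fun a => ?_)
    rw [count_seg, Multiset.count_add, count_val, count_val]
    have hf : (Finset.Icc 1 i1).filter (fun i => π.p i = a)
        = (tOcc π a).filter (fun p => 0 < g p) := by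
      rw [hi1, ← hFP, hFPdef, Finset.filter_comm]
      rfl
    rw [hf]
    exact C1 a
  have e2 : π.seg (i2 + 1) π.l = Ds.val + Bs.val := by
    refine Multiset.ext.mpr (fun a => ?_)
    rw [count_seg, Multiset.count_add, count_val, count_val]
    have hf : (Finset.Icc (i2 + 1) π.l).filter (fun i => π.p i = a)
        = (tOcc π a).filter (fun p => g p < 0) := by
      rw [hi2, ← hFN, hFNdef, Finset.filter_comm]
      rfl
    rw [hf]
    exact C2 a
  have e3 : π.seg (π.l + 1) i3 = As.val + Cs.val := by
    refine Multiset.ext.mpr (fun a => ?_)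
    rw [count_seg, Multiset.count_add, count_val, count_val]
    rw [hi3, card_shift π.l 1 GP.card (fun i => π.p i = a), ← hGP, hGPdef,
      Finset.filter_comm]
    exact C3 a
  have e4 : π.seg (i4 + 1) π.size = Ds.val + Cs.val := by
    refine Multiset.ext.mpr (fun a => ?_)
    rw [count_seg, Multiset.count_add, count_val, count_val]
    rw [show i4 + 1 = π.l + (π.m - GN.card + 1) by omega,
      show π.size = π.l + π.m from rfl,
      card_shift π.l (π.m - GN.card + 1) π.m (fun i => π.p i = a), ← hGN, hGNdef,
      Finset.filter_comm]
    exact C4 a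
  -- disjointness of the corner sets
  have hd1 : Disjoint As Bs := by
    rw [Finset.disjoint_left]
    intro a ha hb
    have h1 := ((hmemAs a).mp ha).1
    have h2 := ((hmemBs a).mp hb).1
    omega
  have hd2 : Disjoint As Cs := by
    rw [Finset.disjoint_left]
    intro a ha hb
    have h1 := ((hmemAs a).mp ha).1
    have h2 := ((hmemCs a).mp hb).1
    omega
  have hd3 : Disjoint As Ds := by
    rw [Finset.disjoint_left]
    intro a ha hb
    have h1 := ((hmemAs a).mp ha).2
    have h2 := ((hmemDs a).mp hb).2
    linarith
  have hd4 : Disjoint Bs Cs := by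
    rw [Finset.disjoint_left]
    intro a ha hb
    have h1 := ((hmemBs a).mp ha).1
    have h2 := ((hmemCs a).mp hb).1
    omega
  have hd5 : Disjoint Bs Ds := by
    rw [Finset.disjoint_left]
    intro a ha hb
    have h1 := ((hmemBs a).mp ha).1
    have h2 := ((hmemDs a).mp hb).1
    omega
  have hd6 : Disjoint Cs Ds := by
    rw [Finset.disjoint_left]
    intro a ha hb
    have h1 := ((hmemCs a).mp ha).1
    have h2 := ((hmemDs a).mp hb).1
    omega
  obtain ⟨z1, z2, z3, z4⟩ := hSI As Bs Cs Ds i1 i2 i3 i4 hd1 hd2 hd3 hd4 hd5 hd6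
    (by omega) (by omega) (by omega) (by omega) (by omega) e1 e2 e3 e4
  -- final contradiction: some corner is nonempty
  rcases hkey with ⟨p, hp1, hpl, hpne⟩ | ⟨q, hq1, hqm, hqne⟩
  · rcases lt_or_gt_of_ne hpne with hneg | hpos
    · have hmem : p ∈ FN := by
        rw [hFNdef, Finset.mem_filter, Finset.mem_Icc]
        exact ⟨⟨hp1, hpl⟩, hneg⟩
      rw [hFN, Finset.mem_Icc] at hmem
      have hmem' : p ∈ Finset.Icc (i2 + 1) π.l := by
        rw [Finset.mem_Icc]
        omega
      have := mem_seg π p hmem' rfl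
      rw [z2] at this
      exact Multiset.notMem_zero _ this
    · have hmem : p ∈ FP := by
        rw [hFPdef, Finset.mem_filter, Finset.mem_Icc]
        exact ⟨⟨hp1, hpl⟩, hpos⟩
      rw [hFP, Finset.mem_Icc] at hmem
      have hmem' : p ∈ Finset.Icc 1 i1 := by
        rw [Finset.mem_Icc]
        omega
      have := mem_seg π p hmem' rfl
      rw [z1] at this
      exact Multiset.notMem_zero _ this
  · rcases lt_or_gt_of_ne hqne with hneg | hpos
    · have hmem : q ∈ GN := by
        rw [hGNdef, Finset.mem_filter, Finset.mem_Icc]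
        exact ⟨⟨hq1, hqm⟩, hneg⟩
      rw [hGN, Finset.mem_Icc] at hmem
      have hmem' : π.l + q ∈ Finset.Icc (i4 + 1) π.size := by
        rw [Finset.mem_Icc]
        omega
      have := mem_seg π (π.l + q) hmem' rfl
      rw [z4] at this
      exact Multiset.notMem_zero _ this
    · have hmem : q ∈ GP := by
        rw [hGPdef, Finset.mem_filter, Finset.mem_Icc]
        exact ⟨⟨hq1, hqm⟩, hpos⟩
      rw [hGP, Finset.mem_Icc] at hmem
      have hmem' : π.l + q ∈ Finset.Icc (π.l + 1) i3 := by
        rw [Finset.mem_Icc]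
        omega
      have := mem_seg π (π.l + q) hmem' rfl
      rw [z3] at this
      exact Multiset.notMem_zero _ this

end Main
/-- A generalized permutation `π` satisfying the convention admits a
suspension data `ζ` with `Im (Σ_{i=1}^{l} ζ_{π(i)}) = 0` if and only if `π` is strongly
irreducible. -/
theorem suspension_im_zero_iff_stronglyIrreducible {A : Type*} [DecidableEq A]
    (π : GenPerm A) (hconv : π.Convention) :
    (∃ ζ : A → ℂ, π.IsSuspension ζ ∧ (π.topSum ζ π.l).im = 0) ↔ π.StronglyIrreducible := by
  constructor
  · rintro ⟨ζ, hsusp, him⟩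
    exact forward_dir π hconv ζ hsusp him
  · intro hSI
    haveI : Fintype A := fintypeOf π
    obtain ⟨τ, hT, hB, hTl, hBm⟩ := exists_strict π hconv hSI
    obtain ⟨lam, hlampos, hlameq⟩ := exists_lambda π hconv
    set ζ : A → ℂ := fun a => { re := lam a, im := τ a } with hζ
    have him_top : ∀ k, (π.topSum ζ k).im = π.topSumR τ k := by
      intro k
      rw [GenPerm.topSum, GenPerm.topSumR, Complex.im_sum]
    have hre_top : ∀ k, (π.topSum ζ k).re = π.topSumR lam k := by
      intro k
      rw [GenPerm.topSum, GenPerm.topSumR, Complex.re_sum]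
    have him_bot : ∀ k, (π.botSum ζ k).im = π.botSumR τ k := by
      intro k
      rw [GenPerm.botSum, GenPerm.botSumR, Complex.im_sum]
    have hre_bot : ∀ k, (π.botSum ζ k).re = π.botSumR lam k := by
      intro k
      rw [GenPerm.botSum, GenPerm.botSumR, Complex.re_sum]
    refine ⟨ζ, ⟨?_, ?_, ?_, ?_⟩, ?_⟩
    · intro a
      exact hlampos a
    · intro i h1 h2
      rw [him_top]
      exact hT i h1 h2
    · intro i h1 h2
      rw [him_bot]
      exact hB i h1 h2
    · apply Complex.ext
      · rw [hre_top, hre_bot]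
        exact hlameq
      · rw [him_top, him_bot, hTl, hBm]
    · rw [him_top]
      exact hTl
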